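/- Let Z be a normal topological space and X a closed subspace of Z, and let f : X → 𝒦(Z) be a continuous map into the space of nonempty compact subsets of Z with the Vietoris topology. If 𝓕 is a finite bright coloring of f, then { cl_{βZ}(F) : F ∈ 𝓕 } (equivalently, {βF : F ∈ 𝓕}) is a bright coloring of the continuous extension f̃ : βX → 𝒦(βZ). -/

import Mathlib

open Set

/-- The Vietoris topology on the powerset of `Z`, generated by the sets
`{A | A ⊆ U}` and `{A | A ∩ U ≠ ∅}` for `U` open.  Its restriction to the
nonempty closed subsets of `Z` is the usual Vietoris topology on `2^Z`. -/
def vietoris (Z : Type*) [TopologicalSpace Z] : TopologicalSpace (Set Z) :=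
  TopologicalSpace.generateFrom
    ({S | ∃ U : Set Z, IsOpen U ∧ S = {A : Set Z | A ⊆ U}} ∪
     {S | ∃ U : Set Z, IsOpen U ∧ S = {A : Set Z | (A ∩ U).Nonempty}})

/-- Continuity of a set-valued map with respect to the Vietoris topology. -/
def VCont {X Z : Type*} [tX : TopologicalSpace X] [TopologicalSpace Z] (f : X → Set Z) : Prop :=
  @Continuous X (Set Z) tX (vietoris Z) f

theorem stmt11 {Z : Type*} [TopologicalSpace Z] [NormalSpace Z]
    (X : Set Z) (hX : IsClosed X)
    (f : X → Set Z)
    (hval : ∀ x, (f x).Nonempty ∧ IsCompact (f x))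
    (hcont : VCont f)
    (ftil : StoneCech X → Set (StoneCech Z))
    (hftilval : ∀ p, (ftil p).Nonempty ∧ IsCompact (ftil p))
    (hftilcont : VCont ftil)
    (hftilext : ∀ x : X, ftil (stoneCechUnit x) = stoneCechUnit '' f x)
    (ι : StoneCech X → StoneCech Z)
    (hιcont : Continuous ι)
    (hιext : ∀ x : X, ι (stoneCechUnit x) = stoneCechUnit (x : Z))
    (𝓕 : Finset (Set X))
    (hcover : ∀ x : X, ∃ F ∈ 𝓕, x ∈ F)
    (hbright : ∀ F ∈ 𝓕, IsClosed F ∧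
      Disjoint (Subtype.val '' F) (closure (⋃ x ∈ F, f x))) :
    (∀ p : StoneCech X, ∃ F ∈ 𝓕, p ∈ closure (stoneCechUnit '' F)) ∧
    ∀ F ∈ 𝓕, IsClosed (closure (stoneCechUnit '' F)) ∧
      Disjoint (ι '' closure (stoneCechUnit '' F))
        (closure (⋃ p ∈ closure (stoneCechUnit '' F), ftil p)) := by
  constructor
  · intro p
    have hsub : Set.range (stoneCechUnit : X → StoneCech X) ⊆
        ⋃ F ∈ 𝓕, stoneCechUnit '' F := by
      rintro _ ⟨x, rfl⟩
      obtain ⟨F, hF, hxF⟩ := hcover x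
      exact Set.mem_biUnion hF ⟨x, hxF, rfl⟩
    have hmem : p ∈ closure (⋃ F ∈ 𝓕, (stoneCechUnit '' F : Set (StoneCech X))) :=
      closure_mono hsub (denseRange_stoneCechUnit p)
    rw [𝓕.closure_biUnion] at hmem
    simpa using hmem
  · intro F hF
    obtain ⟨hFclosed, hdisj⟩ := hbright F hF
    refine ⟨isClosed_closure, ?_⟩
    set A : Set Z := Subtype.val '' F with hAdef
    set B : Set Z := closure (⋃ x ∈ F, f x) with hBdef
    have hAclosed : IsClosed A := hX.isClosedEmbedding_subtypeVal.isClosedMap _ hFclosed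
    have hBclosed : IsClosed B := isClosed_closure
    obtain ⟨g, hg0, hg1, hg01⟩ := exists_continuous_zero_one_of_isClosed hAclosed hBclosed hdisj
    let g' : Z → unitInterval := fun z => ⟨g z, hg01 z⟩
    have hg'cont : Continuous g' := g.continuous.subtype_mk _
    let G : StoneCech Z → unitInterval := stoneCechExtend hg'cont
    have hGcont : Continuous G := continuous_stoneCechExtend hg'cont
    have hGext : ∀ z : Z, G (stoneCechUnit z) = g' z := fun z =>
      congrFun (stoneCechExtend_extends hg'cont) z
    have hA0 : closure (stoneCechUnit '' A) ⊆ G ⁻¹' {0} := by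
      apply closure_minimal _ (isClosed_singleton.preimage hGcont)
      rintro _ ⟨z, hz, rfl⟩
      have := hg0 hz
      simp only [Set.mem_preimage, Set.mem_singleton_iff, hGext z]
      ext
      exact this
    have hB1 : closure (stoneCechUnit '' B) ⊆ G ⁻¹' {1} := by
      apply closure_minimal _ (isClosed_singleton.preimage hGcont)
      rintro _ ⟨z, hz, rfl⟩
      have := hg1 hz
      simp only [Set.mem_preimage, Set.mem_singleton_iff, hGext z]
      ext
      exact this
    set C : Set (StoneCech Z) := closure (stoneCechUnit '' B) with hCdef
    -- left side
    have hι : ι '' closure (stoneCechUnit '' F) ⊆ closure (stoneCechUnit '' A) := by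
      refine (image_closure_subset_closure_image hιcont).trans (closure_mono ?_)
      rintro _ ⟨_, ⟨x, hx, rfl⟩, rfl⟩
      exact ⟨(x : Z), ⟨x, hx, rfl⟩, (hιext x).symm⟩
    -- right side
    have hS : closure (stoneCechUnit '' F) ⊆ {p | ftil p ⊆ C} := by
      have hopen : @IsOpen _ (vietoris (StoneCech Z))
          {A : Set (StoneCech Z) | (A ∩ Cᶜ).Nonempty} :=
        TopologicalSpace.GenerateOpen.basic _
          (Or.inr ⟨Cᶜ, isClosed_closure.isOpen_compl, rfl⟩)
      have hpre : IsOpen (ftil ⁻¹' {A : Set (StoneCech Z) | (A ∩ Cᶜ).Nonempty}) :=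
        @Continuous.isOpen_preimage _ _ _ (vietoris (StoneCech Z)) ftil hftilcont _ hopen
      have heq : {p | ftil p ⊆ C} =
          (ftil ⁻¹' {A : Set (StoneCech Z) | (A ∩ Cᶜ).Nonempty})ᶜ := by
        ext p
        simp [Set.inter_compl_nonempty_iff]
      apply closure_minimal
      · rintro _ ⟨x, hx, rfl⟩
        show ftil (stoneCechUnit x) ⊆ C
        rw [hftilext]
        refine (Set.image_mono ?_).trans subset_closure
        exact (Set.subset_biUnion_of_mem hx).trans subset_closure
      · rw [heq]
        exact hpre.isClosed_compl
    have hright : closure (⋃ p ∈ closure (stoneCechUnit '' F), ftil p) ⊆ C := by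
      apply closure_minimal _ isClosed_closure
      exact Set.iUnion₂_subset fun p hp => hS hp
    have h01 : Disjoint (G ⁻¹' {0}) (G ⁻¹' {1}) := by
      apply Set.disjoint_left.mpr
      intro p hp0 hp1
      simp only [Set.mem_preimage, Set.mem_singleton_iff] at hp0 hp1
      rw [hp0] at hp1
      exact zero_ne_one (congrArg Subtype.val hp1)
    exact h01.mono (hι.trans hA0) (hright.trans hB1)
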